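/- Let A be a unital C*-algebra of real rank zero, let X and Y be unital Banach right A-modules, and let T : X → Y be a continuous linear map such that e⊥Te = 0 for every projection e ∈ A (where (e⊥Te)(x) = T(x·e⊥)·e). Then T is a right A-module homomorphism, i.e., T(x·a) = T(x)·a for all x ∈ X and a ∈ A. -/

import Mathlib

/-- A contractive Banach right module over a (possibly non-unital) C*-algebra `A`:
the action `(x, a) ↦ x·a` is a continuous bilinear map `X × A → X` satisfying
`(x·a)·b = x·(a*b)` and `‖x·a‖ ≤ ‖x‖·‖a‖`. -/
structure BanachRightModule (A X : Type*) [NonUnitalCStarAlgebra A]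
    [NormedAddCommGroup X] [NormedSpace ℂ X] where
  act : X →L[ℂ] A →L[ℂ] X
  act_mul : ∀ (x : X) (a b : A), act (act x a) b = act x (a * b)
  norm_act_le : ∀ (x : X) (a : A), ‖act x a‖ ≤ ‖x‖ * ‖a‖

section Defs

variable {A X Y : Type*} [NonUnitalCStarAlgebra A]
  [NormedAddCommGroup X] [NormedSpace ℂ X]
  [NormedAddCommGroup Y] [NormedSpace ℂ Y]

/-- A projection in a C*-algebra: a self-adjoint idempotent. -/
def IsProjection {A : Type*} [NonUnitalCStarAlgebra A] (e : A) : Prop :=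
  IsSelfAdjoint e ∧ IsIdempotentElem e

/-- The operator `aTb : x ↦ T(x·a)·b`. -/
noncomputable def sandwich (ρX : BanachRightModule A X) (ρY : BanachRightModule A Y)
    (T : X →L[ℂ] Y) (a b : A) : X →L[ℂ] Y :=
  ((ρY.act.flip b).comp T).comp (ρX.act.flip a)

/-- The set of continuous right `A`-module homomorphisms from `X` to `Y`. -/
def homSet (ρX : BanachRightModule A X) (ρY : BanachRightModule A Y) :
    Set (X →L[ℂ] Y) :=
  {Φ | ∀ (x : X) (a : A), Φ (ρX.act x a) = ρY.act (Φ x) a}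

/-- `β(T) = sup{‖eTf‖ : e, f ∈ A projections with ef = 0}`. -/
noncomputable def betaConst (ρX : BanachRightModule A X) (ρY : BanachRightModule A Y)
    (T : X →L[ℂ] Y) : ℝ :=
  sSup {r : ℝ | ∃ e f : A, IsProjection e ∧ IsProjection f ∧ e * f = 0 ∧
    r = ‖sandwich ρX ρY T e f‖}

/-- `γ(T) = sup{‖aTb‖ : a, b ∈ A positive contractions with ab = 0}`. -/
noncomputable def gammaConst [PartialOrder A] [StarOrderedRing A]
    (ρX : BanachRightModule A X) (ρY : BanachRightModule A Y)
    (T : X →L[ℂ] Y) : ℝ :=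
  sSup {r : ℝ | ∃ a b : A, 0 ≤ a ∧ 0 ≤ b ∧ ‖a‖ ≤ 1 ∧ ‖b‖ ≤ 1 ∧ a * b = 0 ∧
    r = ‖sandwich ρX ρY T a b‖}

/-- `δ(T) = sup_{‖x‖ ≤ 1} inf{‖T(x) − Φ(x)‖ : Φ ∈ Hom_A(X,Y)}`. -/
noncomputable def deltaConst (ρX : BanachRightModule A X) (ρY : BanachRightModule A Y)
    (T : X →L[ℂ] Y) : ℝ :=
  sSup {r : ℝ | ∃ x : X, ‖x‖ ≤ 1 ∧
    r = Metric.infDist (T x) ((fun Φ : X →L[ℂ] Y => Φ x) '' homSet ρX ρY)}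

/-- `‖ad(T)‖ = sup{‖aT − Ta‖ : a ∈ A, ‖a‖ ≤ 1}`, where `(aT)(x) = T(x·a)` and
`(Ta)(x) = T(x)·a`. -/
noncomputable def adNorm (ρX : BanachRightModule A X) (ρY : BanachRightModule A Y)
    (T : X →L[ℂ] Y) : ℝ :=
  sSup {r : ℝ | ∃ a : A, ‖a‖ ≤ 1 ∧
    r = ‖T.comp (ρX.act.flip a) - (ρY.act.flip a).comp T‖}

/-- The module `X` is essential: the linear span of `{x·a : x ∈ X, a ∈ A}` is dense. -/
def Essential (ρX : BanachRightModule A X) : Prop :=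
  Dense (Submodule.span ℂ {z : X | ∃ (x : X) (a : A), z = ρX.act x a} : Set X)

end Defs

/-- Let `A` be a unital C*-algebra of real rank zero, `X` and `Y`
unital Banach right `A`-modules, and `T : X → Y` a continuous linear map such that
`e⊥Te = 0` for every projection `e ∈ A` (where `(e⊥Te)(x) = T(x·(1−e))·e`).
Then `T` is a right `A`-module homomorphism. -/
theorem stmt14 {A X Y : Type*} [CStarAlgebra A]
    [NormedAddCommGroup X] [NormedSpace ℂ X] [CompleteSpace X]
    [NormedAddCommGroup Y] [NormedSpace ℂ Y] [CompleteSpace Y]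
    (hRR0 : ∀ a : A, IsSelfAdjoint a →
      a ∈ closure {b : A | IsSelfAdjoint b ∧ (spectrum ℂ b).Finite})
    (ρX : BanachRightModule A X) (ρY : BanachRightModule A Y)
    (hX1 : ∀ x : X, ρX.act x 1 = x) (hY1 : ∀ y : Y, ρY.act y 1 = y)
    (T : X →L[ℂ] Y)
    (h : ∀ e : A, IsProjection e → sandwich ρX ρY T (1 - e) e = 0) :
    ∀ (x : X) (a : A), T (ρX.act x a) = ρY.act (T x) a := by
  classical
  -- evaluate the sandwich hypothesis pointwise
  have hsand : ∀ (e : A), IsProjection e → ∀ x : X,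
      ρY.act (T (ρX.act x (1 - e))) e = 0 := by
    intro e he x
    have := ContinuousLinearMap.ext_iff.mp (h e he) x
    simpa [sandwich] using this
  -- T intertwines the action of every projection
  have hproj : ∀ (e : A), IsProjection e → ∀ x : X,
      T (ρX.act x e) = ρY.act (T x) e := by
    intro e he x
    have he' : IsProjection (1 - e) :=
      ⟨(IsSelfAdjoint.one A).sub he.1, he.2.one_sub⟩
    have h2 : ρY.act (T (ρX.act x e)) (1 - e) = 0 := by
      have := hsand (1 - e) he' x
      rwa [sub_sub_cancel] at this
    have h2' : T (ρX.act x e) = ρY.act (T (ρX.act x e)) e := by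
      rw [map_sub] at h2
      rw [hY1] at h2
      exact (sub_eq_zero.mp h2)
    have hx : x = ρX.act x e + ρX.act x (1 - e) := by
      rw [← map_add]
      have : e + (1 - e) = 1 := by abel
      rw [this, hX1]
    calc T (ρX.act x e) = ρY.act (T (ρX.act x e)) e := h2'
    _ = ρY.act (T x) e := by
        conv_rhs => rw [hx]
        rw [map_add, map_add, ContinuousLinearMap.add_apply, hsand e he x, add_zero]
  -- the set of elements for which T intertwines
  set S : Set A := {a : A | ∀ x : X, T (ρX.act x a) = ρY.act (T x) a} with hSdef
  have hSclosed : IsClosed S := by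
    have hrw : S = ⋂ x : X, {a : A | T (ρX.act x a) = ρY.act (T x) a} := by
      ext a; simp [hSdef, Set.mem_iInter]
    rw [hrw]
    refine isClosed_iInter fun x => isClosed_eq ?_ ?_
    · exact T.continuous.comp (ρX.act x).continuous
    · exact (ρY.act (T x)).continuous
  -- self-adjoint elements with finite spectrum lie in S
  have hfin : ∀ b : A, IsSelfAdjoint b → (spectrum ℂ b).Finite → b ∈ S := by
    intro b hb hfb
    have hfinR : (spectrum ℝ b).Finite := by
      rw [← spectrum.preimage_algebraMap ℂ (a := b)]
      exact hfb.preimage ((FaithfulSMul.algebraMap_injective ℝ ℂ).injOn)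
    set s : Finset ℝ := hfinR.toFinset with hs
    set g : ℝ → ℝ → ℝ := fun μ t => if t = μ then (1 : ℝ) else 0 with hg
    have hcont : ∀ μ : ℝ, ContinuousOn (g μ) (spectrum ℝ b) :=
      fun μ => hfinR.continuousOn _
    have hcont' : ∀ μ : ℝ, ContinuousOn (fun t => μ • g μ t) (spectrum ℝ b) :=
      fun μ => hfinR.continuousOn _
    have hprojμ : ∀ μ : ℝ, IsProjection (cfc (g μ) b) := by
      intro μ
      refine ⟨cfc_predicate _ b, ?_⟩
      unfold IsIdempotentElem
      rw [← cfc_mul (g μ) (g μ) b (hcont μ) (hcont μ)]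
      apply cfc_congr
      intro t _
      by_cases hμ : t = μ <;> simp [hg, hμ]
    have hdecomp : b = ∑ μ ∈ s, μ • cfc (g μ) b := by
      calc b = cfc (id : ℝ → ℝ) b := (cfc_id ℝ b hb).symm
      _ = cfc (fun t => ∑ μ ∈ s, μ • g μ t) b := by
          apply cfc_congr
          intro t ht
          simp only [hg, smul_eq_mul, mul_ite, mul_one, mul_zero]
          rw [Finset.sum_ite_eq s t (fun μ => μ)]
          have hts : t ∈ s := by rw [hs, Set.Finite.mem_toFinset]; exact ht
          simp [hts]
      _ = ∑ μ ∈ s, cfc (fun t => μ • g μ t) b := by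
          have := cfc_sum (fun μ t => μ • g μ t) b s (fun μ _ => hcont' μ)
          rw [← this]
          congr 1
          ext t
          simp
      _ = ∑ μ ∈ s, μ • cfc (g μ) b := by
          refine Finset.sum_congr rfl fun μ _ => ?_
          exact cfc_smul μ (g μ) b (hcont μ)
    intro x
    conv_lhs => rw [hdecomp]
    conv_rhs => rw [hdecomp]
    rw [map_sum, map_sum, map_sum]
    refine Finset.sum_congr rfl fun μ _ => ?_
    rw [(ρX.act x).map_smul_of_tower, T.map_smul_of_tower,
      (ρY.act (T x)).map_smul_of_tower, hproj _ (hprojμ μ) x]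
  -- all self-adjoint elements lie in S, by real rank zero and closedness
  have hsa : ∀ b : A, IsSelfAdjoint b → b ∈ S := by
    intro b hb
    have hb' : b ∈ closure S :=
      closure_mono (fun c hc => hfin c hc.1 hc.2) (hRR0 b hb)
    rwa [hSclosed.closure_eq] at hb'
  -- conclude via real/imaginary parts
  intro x a
  have hre := hsa _ (realPart a).property x
  have him := hsa _ (imaginaryPart a).property x
  have hdec : (↑(realPart a) : A) + Complex.I • (↑(imaginaryPart a) : A) = a :=
    realPart_add_I_smul_imaginaryPart a
  rw [← hdec]
  simp only [map_add, map_smul, ContinuousLinearMap.add_apply]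
  rw [hre, him]
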